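/- arXiv:1202.3303 — 2 statements merged into one kernel-verified Lean document; each statement's English description precedes it below -/
import Mathlib

section
/- Let M be a finite simple matroid on n elements with girth d* (and d* ≤ n, i.e., M has at least one circuit). Then the number of flats of M of rank d* − 1 is strictly smaller than the binomial coefficient C(n, d* − 1). -/
open Matroid Polynomial Finset
open scoped Classical

namespace PaperMatroid

variable {α : Type*}

/-- The rank of a finset in a matroid on a finite type: the maximum size of an
independent subset. -/
noncomputable def mrk [Fintype α] (M : Matroid α) (x : Finset α) : ℕ :=
  (x.powerset.filter (fun (I : Finset α) => M.Indep (I : Set α))).sup Finset.card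

/-- A circuit of a matroid: a minimal dependent set. -/
def IsCircuit (M : Matroid α) (C : Set α) : Prop :=
  M.Dep C ∧ ∀ ⦃D⦄, D ⊂ C → M.Indep D

/-- The girth of a matroid: the minimum size of a circuit. -/
noncomputable def girth (M : Matroid α) : ℕ :=
  sInf {n | ∃ C, IsCircuit M C ∧ C.ncard = n}

/-- The cogirth of a matroid: the girth of the dual matroid, i.e. the minimum
size of a cocircuit. -/
noncomputable def cogirth (M : Matroid α) : ℕ := girth M✶

/-- The finset of (finsets corresponding to) flats of a matroid on a finite type. -/
noncomputable def flats [Fintype α] (M : Matroid α) : Finset (Finset α) :=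
  Finset.univ.filter fun F => M.IsFlat ↑F

/-- The Möbius function of the lattice of flats of a matroid:
`μ(X,X) = 1`, `μ(X,Y) = -Σ_{X ⊆ Z ⊊ Y, Z a flat} μ(X,Z)` for `X ⊊ Y`, and `0` otherwise. -/
noncomputable def mob [Fintype α] (M : Matroid α) (X Y : Finset α) : ℤ :=
  if X = Y then 1
  else if X ⊆ Y then
    -∑ Z ∈ ((flats M).filter fun Z => X ⊆ Z ∧ Z ⊂ Y).attach, mob M X Z.1
  else 0
termination_by Y.card
decreasing_by
  · have hZ := Z.2
    simp only [Finset.mem_filter] at hZ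
    exact Finset.card_lt_card hZ.2.2

/-- The Möbius polynomial of a matroid, as a polynomial in `S` (the outer
variable) whose coefficients are polynomials in `T` (the inner variable):
`μ_M(S,T) = Σ_{x ∈ L} Σ_{x ⊆ y ∈ L} μ(x,y) S^{r(x)} T^{k - r(y)}`,
where `L` is the lattice of flats and `k` is the rank of `M`. -/
noncomputable def mobiusPoly [Fintype α] (M : Matroid α) : Polynomial (Polynomial ℤ) :=
  ∑ x ∈ flats M, ∑ y ∈ (flats M).filter (fun y => x ⊆ y),
    mob M x y • (Polynomial.X ^ (mrk M x) *
      Polynomial.C (Polynomial.X ^ (mrk M Finset.univ - mrk M y)))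

/-- The coboundary polynomial of a matroid, as a polynomial in `S` (the outer
variable) whose coefficients are polynomials in `T` (the inner variable):
`χ_M(S,T) = Σ_{x ∈ L} Σ_{x ⊆ y ∈ L} μ(x,y) S^{|x|} T^{k - r(y)}`,
where `L` is the lattice of flats, `|x|` is the number of ground-set elements
of the flat `x`, and `k` is the rank of `M`. -/
noncomputable def cobPoly [Fintype α] (M : Matroid α) : Polynomial (Polynomial ℤ) :=
  ∑ x ∈ flats M, ∑ y ∈ (flats M).filter (fun y => x ⊆ y),
    mob M x y • (Polynomial.X ^ x.card *
      Polynomial.C (Polynomial.X ^ (mrk M Finset.univ - mrk M y)))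

/-- The closure of any set is a flat. -/
lemma flat_closure' (M : Matroid α) (X : Set α) : M.IsFlat (M.closure X) := by
  rw [Matroid.closure_def]
  haveI : Nonempty ↑{F | M.IsFlat F ∧ X ∩ M.E ⊆ F} :=
    ⟨⟨M.E, M.ground_isFlat, Set.inter_subset_right⟩⟩
  rw [Set.sInter_eq_iInter]
  exact Matroid.IsFlat.iInter fun F => F.2.1

/-- Every dependent set in a matroid on a finite type contains a circuit. -/
lemma dep_exists_circuit_subset [Fintype α] (M : Matroid α) :
    ∀ D : Set α, M.Dep D → ∃ C ⊆ D, IsCircuit M C := by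
  have key : ∀ m : ℕ, ∀ D : Set α, D.ncard ≤ m → M.Dep D → ∃ C ⊆ D, IsCircuit M C := by
    intro m
    induction m with
    | zero =>
      intro D hcard hD
      have : D = ∅ := by
        rw [← Set.ncard_eq_zero D.toFinite]; omega
      rw [this] at hD
      exact absurd M.empty_indep hD.not_indep
    | succ m ih =>
      intro D hcard hD
      by_cases h : ∀ ⦃D'⦄, D' ⊂ D → M.Indep D'
      · exact ⟨D, subset_rfl, hD, h⟩
      · push_neg at h
        obtain ⟨D', hss, hdep⟩ := h
        have hD' : M.Dep D' := ⟨hdep, hss.subset.trans hD.subset_ground⟩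
        have hlt : D'.ncard < D.ncard := Set.ncard_lt_ncard hss D.toFinite
        obtain ⟨C, hCD', hC⟩ := ih D' (by omega) hD'
        exact ⟨C, hCD'.trans hss.subset, hC⟩
  exact fun D hD => key D.ncard D le_rfl hD

/-- Any set of size smaller than the girth is independent. -/
lemma indep_of_ncard_lt_girth [Fintype α] {M : Matroid α} (hE : M.E = Set.univ)
    {D : Set α} (hD : D.ncard < girth M) : M.Indep D := by
  by_contra hind
  have hdep : M.Dep D := ⟨hind, by rw [hE]; exact Set.subset_univ D⟩
  obtain ⟨C, hCD, hC⟩ := dep_exists_circuit_subset M D hdep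
  have h1 : girth M ≤ C.ncard := Nat.sInf_le ⟨C, hC, rfl⟩
  have h2 : C.ncard ≤ D.ncard := Set.ncard_le_ncard hCD D.toFinite
  omega

/-- A circuit is contained in the closure of itself minus an element. -/
lemma circuit_subset_closure_diff [Fintype α] {M : Matroid α} {C : Set α}
    (hC : IsCircuit M C) {x : α} (hx : x ∈ C) : C ⊆ M.closure (C \ {x}) := by
  have hI : M.Indep (C \ {x}) :=
    hC.2 (Set.sdiff_singleton_ssubset.2 hx)
  intro y hy
  by_cases hyx : y = x
  · subst hyx
    rw [hI.mem_closure_iff]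
    left
    rw [Set.insert_diff_singleton, Set.insert_eq_of_mem hx]
    exact hC.1
  · exact M.subset_closure _ hI.subset_ground ⟨hy, hyx⟩

/-- In a finite simple matroid `M` on `n` elements with girth
`d* ≤ n` (so `M` has a circuit), the number of flats of rank `d* - 1` is
strictly smaller than `C(n, d* - 1)`. -/
theorem card_flats_girth_sub_one_lt {α : Type*} [Fintype α] (M : Matroid α)
    (hE : M.E = Set.univ) (n : ℕ) (hn : n = Fintype.card α)
    (hsimple : 2 < girth M) (hgirth : girth M ≤ n) :
    ((flats M).filter fun F => mrk M F = girth M - 1).card <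
      n.choose (girth M - 1) := by
  set d := girth M with hd
  set k := d - 1 with hk
  -- the closure map as a map on finsets
  set f : Finset α → Finset α := fun B => Finset.univ.filter (· ∈ M.closure ↑B) with hf
  have hcoe : ∀ B : Finset α, ↑(f B) = M.closure ↑B := by
    intro B
    ext x
    simp [hf]
  set T : Finset (Finset α) := Finset.powersetCard k Finset.univ with hT
  have hTcard : T.card = n.choose k := by
    rw [hT, Finset.card_powersetCard, Finset.card_univ, hn]
  -- every B of card k is independent
  have hindep : ∀ B : Finset α, B.card = k → M.Indep ↑B := by
    intro B hB
    apply indep_of_ncard_lt_girth hE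
    rw [Set.ncard_coe_finset, hB]
    omega
  -- rank of f B is k
  have hrank : ∀ B : Finset α, B.card = k → mrk M (f B) = k := by
    intro B hB
    have hBi := hindep B hB
    apply le_antisymm
    · apply Finset.sup_le
      intro I hI
      rw [Finset.mem_filter, Finset.mem_powerset] at hI
      obtain ⟨hIsub, hIind⟩ := hI
      have hIcl : (↑I : Set α) ⊆ M.closure ↑B := by
        rw [← hcoe]; exact_mod_cast hIsub
      obtain ⟨J, hJ, hIJ⟩ := hIind.subset_isBasis_of_subset hIcl
        (M.closure_subset_ground _)
      have hBbasis : M.IsBasis ↑B (M.closure ↑B) := hBi.isBasis_closure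
      have hcard : (↑J : Set α).encard = (↑B : Set α).encard :=
        hJ.encard_eq_encard hBbasis
      have h1 : (↑I : Set α).encard ≤ (↑J : Set α).encard :=
        Set.encard_le_encard hIJ
      rw [hcard, Set.encard_coe_eq_coe_finsetCard, Set.encard_coe_eq_coe_finsetCard] at h1
      rw [← hB]
      exact_mod_cast h1
    · have hBmem : B ∈ (f B).powerset.filter (fun (I : Finset α) => M.Indep (I : Set α)) := by
        rw [Finset.mem_filter, Finset.mem_powerset]
        refine ⟨?_, hBi⟩
        rw [← Finset.coe_subset, hcoe]
        exact M.subset_closure _ hBi.subset_ground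
      calc k = B.card := hB.symm
        _ ≤ _ := Finset.le_sup hBmem
  -- f B is a flat
  have hflat : ∀ B : Finset α, f B ∈ flats M := by
    intro B
    rw [flats, Finset.mem_filter]
    refine ⟨Finset.mem_univ _, ?_⟩
    rw [hcoe]
    exact flat_closure' M _
  -- every flat of rank k is f B for some B ∈ T
  have hsurj : ((flats M).filter fun F => mrk M F = k) ⊆ T.image f := by
    intro F hF
    rw [Finset.mem_filter] at hF
    obtain ⟨hFflats, hFrank⟩ := hF
    rw [flats, Finset.mem_filter] at hFflats
    have hFflat : M.IsFlat ↑F := hFflats.2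
    -- the sup in mrk is attained
    have hne : ((F.powerset.filter (fun (I : Finset α) => M.Indep (I : Set α)))).Nonempty :=
      ⟨∅, by simp [M.empty_indep]⟩
    obtain ⟨I, hImem, hIsup⟩ := Finset.exists_mem_eq_sup _ hne Finset.card
    rw [Finset.mem_filter, Finset.mem_powerset] at hImem
    obtain ⟨hIF, hIind⟩ := hImem
    have hIcard : I.card = k := by
      rw [← hFrank, mrk, hIsup]
    -- F ⊆ closure I
    have hFcl : (↑F : Set α) ⊆ M.closure ↑I := by
      intro x hxF
      by_contra hxcl
      have hxE : x ∈ M.E := by rw [hE]; trivial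
      have hxI : x ∉ I := fun hxI =>
        hxcl (M.subset_closure _ hIind.subset_ground hxI)
      have hins : M.Indep (insert x ↑I) := by
        rw [hIind.insert_indep_iff]
        exact Or.inl ⟨hxE, hxcl⟩
      have hmem : insert x I ∈ F.powerset.filter (fun (I : Finset α) => M.Indep (I : Set α)) := by
        rw [Finset.mem_filter, Finset.mem_powerset]
        constructor
        · exact Finset.insert_subset hxF hIF
        · rwa [Finset.coe_insert]
      have hle := Finset.le_sup (f := Finset.card) hmem
      rw [hIsup, Finset.card_insert_of_notMem hxI] at hle
      omega
    have hclF : M.closure ↑I = ↑F := by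
      apply subset_antisymm
      · have := M.closure_subset_closure (Finset.coe_subset.mpr hIF)
        rwa [hFflat.closure] at this
      · exact hFcl
    rw [Finset.mem_image]
    refine ⟨I, ?_, ?_⟩
    · rw [hT, Finset.mem_powersetCard]
      exact ⟨Finset.subset_univ _, hIcard⟩
    · apply Finset.coe_injective
      rw [hcoe, hclF]
  -- a circuit of size d exists
  have hSetne : {m | ∃ C, IsCircuit M C ∧ C.ncard = m}.Nonempty := by
    by_contra hemp
    rw [Set.not_nonempty_iff_eq_empty] at hemp
    have h0 : girth M = 0 := by
      show sInf {m | ∃ C, IsCircuit M C ∧ C.ncard = m} = 0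
      rw [hemp, Nat.sInf_empty]
    omega
  have hSne : girth M ∈ {m | ∃ C, IsCircuit M C ∧ C.ncard = m} := Nat.sInf_mem hSetne
  obtain ⟨C, hC, hCcard⟩ := hSne
  have hCfin : C.Finite := C.toFinite
  set c : Finset α := hCfin.toFinset with hc
  have hccoe : ↑c = C := hCfin.coe_toFinset
  have hccard : c.card = d := by
    rw [hd, ← hCcard, ← hccoe, Set.ncard_coe_finset]
  -- two distinct elements of c
  have h2card : 1 < c.card := by omega
  obtain ⟨x, hx, y, hy, hxy⟩ := Finset.one_lt_card.mp h2card
  set B₁ := c.erase x with hB₁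
  set B₂ := c.erase y with hB₂
  have hB₁card : B₁.card = k := by
    rw [hB₁, Finset.card_erase_of_mem hx, hccard]
  have hB₂card : B₂.card = k := by
    rw [hB₂, Finset.card_erase_of_mem hy, hccard]
  have hB₁ne : B₁ ≠ B₂ := by
    intro h
    have hyB : y ∈ B₂ := by
      rw [← h, hB₁]
      exact Finset.mem_erase.mpr ⟨fun e => hxy e.symm, hy⟩
    exact (Finset.mem_erase.mp hyB).1 rfl
  have hclerase : ∀ z ∈ c, M.closure ↑(c.erase z) = M.closure C := by
    intro z hz
    have hzC : z ∈ C := by rw [← hccoe]; exact_mod_cast hz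
    have hcoeer : ↑(c.erase z) = C \ {z} := by
      rw [Finset.coe_erase, hccoe]
    rw [hcoeer]
    apply subset_antisymm
    · exact M.closure_subset_closure Set.diff_subset
    · have h1 : C ⊆ M.closure (C \ {z}) := circuit_subset_closure_diff hC hzC
      have := M.closure_subset_closure_of_subset_closure h1
      exact this
  have hfeq : f B₁ = f B₂ := by
    apply Finset.coe_injective
    rw [hcoe, hcoe, hB₁, hB₂, hclerase x hx, hclerase y hy]
  have hB₁T : B₁ ∈ T := by
    rw [hT, Finset.mem_powersetCard]
    exact ⟨Finset.subset_univ _, hB₁card⟩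
  have hB₂T : B₂ ∈ T := by
    rw [hT, Finset.mem_powersetCard]
    exact ⟨Finset.subset_univ _, hB₂card⟩
  -- strict inequality
  have himage : (T.image f).card < T.card := by
    refine lt_of_le_of_ne Finset.card_image_le ?_
    intro h
    have hinj := Finset.card_image_iff.mp h
    exact hB₁ne (hinj hB₁T hB₂T hfeq)
  calc ((flats M).filter fun F => mrk M F = k).card
      ≤ (T.image f).card := Finset.card_le_card hsurj
    _ < T.card := himage
    _ = n.choose k := hTcard

end PaperMatroid
end

section
/- Let M be a finite simple matroid of rank k on n elements with girth d* and cogirth d. Write the coboundary polynomial of M as χ_M(S,T) = Σ_{i=0}^n χ_i(T) S^i and the Möbius polynomial of M as μ_M(S,T) = Σ_{i=0}^k μ_i(T) S^i. Then: (1) χ_i(T) = μ_i(T) for all i < d* − 1; (2) χ_i(T) = 0 for all i with n − d < i < n; and (3) χ_n(T) = 1. -/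
open Matroid Polynomial Finset
open scoped Classical

namespace PaperMatroid

variable {α : Type*}

section Aux

variable [Fintype α] {M : Matroid α}

lemma exists_circuit_subset (M : Matroid α) (X : Set α) (hX : M.Dep X) :
    ∃ C, C ⊆ X ∧ IsCircuit M C := by
  induction' hn : X.ncard using Nat.strong_induction_on with n ih generalizing X
  subst hn
  by_cases h : ∀ ⦃D⦄, D ⊂ X → M.Indep D
  · exact ⟨X, subset_rfl, hX, h⟩
  · push_neg at h
    obtain ⟨D, hDX, hD⟩ := h
    have hDdep : M.Dep D := ⟨hD, hDX.subset.trans hX.subset_ground⟩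
    obtain ⟨C, hCD, hC⟩ := ih D.ncard
      (Set.ncard_lt_ncard hDX (Set.toFinite X)) D hDdep rfl
    exact ⟨C, hCD.trans hDX.subset, hC⟩

lemma girth_le_of_circuit {C : Set α} (hC : IsCircuit M C) : girth M ≤ C.ncard :=
  Nat.sInf_le ⟨C, hC, rfl⟩

lemma indep_of_card_lt_girth (hE : M.E = Set.univ) {x : Finset α}
    (hx : x.card < girth M) : M.Indep ↑x := by
  by_contra h
  have hdep : M.Dep ↑x := ⟨h, by rw [hE]; exact Set.subset_univ _⟩
  obtain ⟨C, hCx, hC⟩ := exists_circuit_subset M _ hdep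
  have h1 : girth M ≤ C.ncard := girth_le_of_circuit hC
  have h2 : C.ncard ≤ x.card := by
    have := Set.ncard_le_ncard hCx (Set.toFinite _)
    rwa [Set.ncard_coe_finset] at this
  omega

lemma mrk_le_card {x : Finset α} : mrk M x ≤ x.card :=
  Finset.sup_le fun I hI =>
    Finset.card_le_card (Finset.mem_powerset.1 (Finset.mem_filter.1 hI).1)

lemma le_mrk {I x : Finset α} (hIx : I ⊆ x) (hI : M.Indep ↑I) : I.card ≤ mrk M x :=
  Finset.le_sup (Finset.mem_filter.2 ⟨Finset.mem_powerset.2 hIx, hI⟩)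

lemma mrk_eq_card_of_indep {x : Finset α} (h : M.Indep ↑x) : mrk M x = x.card :=
  le_antisymm mrk_le_card (le_mrk subset_rfl h)

lemma circuit_mrk_lower {C : Set α} {x : Finset α} (hC : IsCircuit M C)
    (hCx : C ⊆ ↑x) : C.ncard - 1 ≤ mrk M x := by
  have hCne : C.Nonempty := by
    rcases C.eq_empty_or_nonempty with rfl | h
    · exact absurd M.empty_indep hC.1.1
    · exact h
  obtain ⟨c, hc⟩ := hCne
  have hD : M.Indep (C \ {c}) := hC.2 (Set.sdiff_singleton_ssubset.2 hc)
  have hfin : (C \ {c}).Finite := Set.toFinite _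
  have hsub : hfin.toFinset ⊆ x := by
    intro a ha
    simp only [Set.Finite.mem_toFinset] at ha
    exact hCx ha.1
  have hcard : hfin.toFinset.card = C.ncard - 1 := by
    rw [← Set.ncard_eq_toFinset_card _ hfin]
    exact Set.ncard_diff_singleton_of_mem hc
  have := le_mrk hsub (by rwa [Set.Finite.coe_toFinset])
  rwa [hcard] at this

lemma card_eq_iff_mrk_eq (hE : M.E = Set.univ) {x : Finset α} {i : ℕ}
    (hi : i < girth M - 1) (hg : 2 < girth M) :
    x.card = i ↔ mrk M x = i := by
  constructor
  · intro h
    rw [mrk_eq_card_of_indep (indep_of_card_lt_girth hE (by omega)), h]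
  · intro h
    by_cases hind : M.Indep ↑x
    · rw [← h, mrk_eq_card_of_indep hind]
    · exfalso
      have hdep : M.Dep ↑x := ⟨hind, by rw [hE]; exact Set.subset_univ _⟩
      obtain ⟨C, hCx, hC⟩ := exists_circuit_subset M _ hdep
      have h1 : girth M ≤ C.ncard := girth_le_of_circuit hC
      have h2 : C.ncard - 1 ≤ mrk M x := circuit_mrk_lower hC hCx
      omega

lemma cogirth_add_card_le (hE : M.E = Set.univ) {x : Finset α}
    (hx : M.IsFlat ↑x) (hne : x ≠ Finset.univ) :
    cogirth M + x.card ≤ Fintype.card α := by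
  have hdep : M✶.Dep ↑(Finset.univ \ x) := by
    rw [Matroid.dep_iff]
    refine ⟨fun hco => ?_, by rw [Matroid.dual_ground, hE]; exact Set.subset_univ _⟩
    have hsp : M.Spanning (M.E \ ↑(Finset.univ \ x)) :=
      Matroid.coindep_iff_compl_spanning (by rw [hE]; exact Set.subset_univ _) |>.1 hco
    have heq : M.E \ ↑(Finset.univ \ x) = ↑x := by
      rw [hE, Finset.coe_sdiff, Finset.coe_univ,
        Set.diff_diff_cancel_left (Set.subset_univ _)]
    rw [heq] at hsp
    have hcl : M.closure ↑x = M.E :=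
      (Matroid.spanning_iff_closure_eq (by rw [hE]; exact Set.subset_univ _)).1 hsp
    have hxe : (↑x : Set α) = M.E := by rw [← hx.closure, hcl]
    rw [hE, Finset.coe_eq_univ] at hxe
    exact hne hxe
  obtain ⟨C, hCsub, hC⟩ := exists_circuit_subset M✶ _ hdep
  have h1 : cogirth M ≤ C.ncard := girth_le_of_circuit hC
  have h2 : C.ncard ≤ (Finset.univ \ x).card := by
    have := Set.ncard_le_ncard hCsub (Set.toFinite _)
    rwa [Set.ncard_coe_finset] at this
  have h3 : (Finset.univ \ x).card = Fintype.card α - x.card := by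
    rw [Finset.card_sdiff_of_subset (Finset.subset_univ x), Finset.card_univ]
  have h4 : x.card ≤ Fintype.card α := Finset.card_le_univ x
  omega

lemma coeff_double (M : Matroid α) (a : Finset α → ℕ) (i : ℕ) :
    (∑ x ∈ flats M, ∑ y ∈ (flats M).filter (fun y => x ⊆ y),
      mob M x y • ((Polynomial.X : Polynomial (Polynomial ℤ)) ^ a x *
        Polynomial.C (Polynomial.X ^ (mrk M Finset.univ - mrk M y)))).coeff i
    = ∑ x ∈ flats M, if a x = i then
        (∑ y ∈ (flats M).filter (fun y => x ⊆ y),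
          mob M x y • (Polynomial.X : Polynomial ℤ) ^ (mrk M Finset.univ - mrk M y))
      else 0 := by
  have key : ∀ (p : Polynomial ℤ) (b : ℕ),
      ((Polynomial.X : Polynomial (Polynomial ℤ)) ^ b * Polynomial.C p).coeff i
        = if b = i then p else 0 := by
    intro p b
    rw [Polynomial.coeff_mul_C, Polynomial.coeff_X_pow]
    by_cases h : b = i
    · simp [h]
    · simp [h, Ne.symm h]
  rw [Polynomial.finset_sum_coeff]
  refine Finset.sum_congr rfl fun x _ => ?_
  rw [Polynomial.finset_sum_coeff]
  by_cases h : a x = i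
  · rw [if_pos h]
    refine Finset.sum_congr rfl fun y _ => ?_
    rw [Polynomial.coeff_smul, key, if_pos h]
  · rw [if_neg h]
    refine Finset.sum_eq_zero fun y _ => ?_
    rw [Polynomial.coeff_smul, key, if_neg h, smul_zero]

end Aux

/-- For a finite simple matroid `M` of rank `k` on `n` elements
with girth `d*` and cogirth `d`, writing `χ_M(S,T) = Σ χ_i(T) S^i` and
`μ_M(S,T) = Σ μ_i(T) S^i`: (1) `χ_i(T) = μ_i(T)` for `i < d* - 1`;
(2) `χ_i(T) = 0` for `n - d < i < n`; (3) `χ_n(T) = 1`. -/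
theorem cobPoly_coeffs_from_mobiusPoly {α : Type*} [Fintype α] (M : Matroid α)
    (hE : M.E = Set.univ) (n k : ℕ) (hn : n = Fintype.card α)
    (hk : k = mrk M Finset.univ) (hsimple : 2 < girth M) :
    (∀ i : ℕ, i < girth M - 1 → (cobPoly M).coeff i = (mobiusPoly M).coeff i) ∧
    (∀ i : ℕ, n - cogirth M < i → i < n → (cobPoly M).coeff i = 0) ∧
    (cobPoly M).coeff n = 1 := by
  subst hn
  have huniv : (Finset.univ : Finset α) ∈ flats M := by
    refine Finset.mem_filter.2 ⟨Finset.mem_univ _, ?_⟩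
    rw [Finset.coe_univ, ← hE]
    exact M.ground_isFlat
  refine ⟨?_, ?_, ?_⟩
  · intro i hi
    rw [cobPoly, mobiusPoly, coeff_double M Finset.card i, coeff_double M (mrk M) i]
    exact Finset.sum_congr rfl fun x _ =>
      if_congr (card_eq_iff_mrk_eq hE hi hsimple) rfl rfl
  · intro i hi1 hi2
    rw [cobPoly, coeff_double M Finset.card i]
    refine Finset.sum_eq_zero fun x hx => ?_
    rw [if_neg]
    intro hcard
    have hflat : M.IsFlat ↑x := (Finset.mem_filter.1 hx).2
    have hne : x ≠ Finset.univ := by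
      intro h
      subst h
      rw [Finset.card_univ] at hcard
      omega
    have := cogirth_add_card_le hE hflat hne
    omega
  · rw [cobPoly, coeff_double M Finset.card (Fintype.card α)]
    have step1 : ∑ x ∈ flats M, (if x.card = Fintype.card α then
          (∑ y ∈ (flats M).filter (fun y => x ⊆ y),
            mob M x y • (Polynomial.X : Polynomial ℤ) ^ (mrk M Finset.univ - mrk M y))
        else 0)
        = ∑ x ∈ flats M, (if x = Finset.univ then
          (∑ y ∈ (flats M).filter (fun y => x ⊆ y),
            mob M x y • (Polynomial.X : Polynomial ℤ) ^ (mrk M Finset.univ - mrk M y))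
        else 0) :=
      Finset.sum_congr rfl fun x _ => if_congr (Finset.card_eq_iff_eq_univ x) rfl rfl
    rw [step1, Finset.sum_ite_eq' (flats M) Finset.univ, if_pos huniv]
    have hfilt : (flats M).filter (fun y => Finset.univ ⊆ y) = {Finset.univ} := by
      ext y
      constructor
      · intro hy
        exact Finset.mem_singleton.2 (Finset.univ_subset_iff.1 (Finset.mem_filter.1 hy).2)
      · intro hy
        rw [Finset.mem_singleton] at hy
        subst hy
        exact Finset.mem_filter.2 ⟨huniv, subset_rfl⟩
    rw [hfilt, Finset.sum_singleton]
    rw [show mob M Finset.univ Finset.univ = 1 from by rw [mob]; simp]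
    simp

end PaperMatroid
end
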